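/- Let d be a natural number that is not a perfect square, T the minimal period of the continued fraction expansion of √d, and (u_n), (v_n) the associated integer sequences. If there exists an integer N with 1 ≤ N ≤ T−1 such that v_N divides u_N, then T = 2N; in particular T is even. -/

import Mathlib

/-- The complete quotients of a real number `x`:
`cq x 0 = x` and `cq x (n+1) = 1 / (cq x n - ⌊cq x n⌋)`. -/
noncomputable def cq (x : ℝ) : ℕ → ℝ
  | 0 => x
  | n + 1 => (Int.fract (cq x n))⁻¹

/-- The partial quotients of a real number `x`: `pq x n = ⌊cq x n⌋`. -/
noncomputable def pq (x : ℝ) (n : ℕ) : ℤ := ⌊cq x n⌋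

/-- if `v_N ∣ u_N` for some `1 ≤ N ≤ T-1`, then `T = 2N`;
in particular `T` is even. -/
theorem stmt10 (d : ℕ) (hd : ¬ IsSquare d)
    (a a' : ℕ → ℤ) (ha : ∀ n, a n = pq (Real.sqrt d) n)
    (ha'0 : a' 0 = 2 * a 0) (ha' : ∀ n, 1 ≤ n → a' n = a n)
    (u v : ℕ → ℤ) (hu0 : u 0 = a 0) (hv0 : v 0 = 1)
    (hupos : ∀ n, 0 < u n) (hvpos : ∀ n, 0 < v n)
    (hu : ∀ n, u (n + 1) = a' n * v n - u n)
    (hv : ∀ n, v n * v (n + 1) = (d : ℤ) - (u (n + 1)) ^ 2)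
    (T : ℕ) (hT : 1 ≤ T)
    (hper : ∀ n, 1 ≤ n → pq (Real.sqrt d) (n + T) = pq (Real.sqrt d) n)
    (hmin : ∀ T', 1 ≤ T' →
      (∀ n, 1 ≤ n → pq (Real.sqrt d) (n + T') = pq (Real.sqrt d) n) → T ≤ T')
    (N : ℕ) (hN1 : 1 ≤ N) (hNT : N ≤ T - 1) (hdvd : v N ∣ u N) :
    T = 2 * N ∧ Even T := by
  set s := Real.sqrt d with hs
  have hdnn : (0:ℝ) ≤ (d:ℝ) := by positivity
  have hss : s ^ 2 = (d:ℝ) := Real.sq_sqrt hdnn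
  have hirr : Irrational s := irrational_sqrt_natCast_iff.mpr hd
  have hd2 : 2 ≤ d := by
    by_contra h
    push_neg at h
    interval_cases d
    · exact hd ⟨0, rfl⟩
    · exact hd ⟨1, rfl⟩
  -- irrationality of all complete quotients
  have hcqirr : ∀ n, Irrational (cq s n) := by
    intro n
    induction n with
    | zero => exact hirr
    | succ n ih =>
      show Irrational (Int.fract (cq s n))⁻¹
      rw [← Int.self_sub_floor]
      exact (ih.sub_intCast _).inv
  have hfr0 : ∀ n, 0 < Int.fract (cq s n) := by
    intro n
    rcases lt_or_eq_of_le (Int.fract_nonneg (cq s n)) with h | h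
    · exact h
    · exfalso
      have : Irrational (Int.fract (cq s n)) := by
        rw [← Int.self_sub_floor]; exact (hcqirr n).sub_intCast _
      exact this.ne_int 0 (by rw [← h]; simp)
  have hfr1 : ∀ n, Int.fract (cq s n) < 1 := fun n => Int.fract_lt_one _
  have hcqgt : ∀ n, 1 < cq s (n + 1) := by
    intro n
    show 1 < (Int.fract (cq s n))⁻¹
    exact (one_lt_inv_iff₀).mpr ⟨hfr0 n, hfr1 n⟩
  have ha1 : ∀ n, 1 ≤ n → 1 ≤ a n := by
    intro n hn
    rw [ha]
    obtain ⟨m, rfl⟩ : ∃ m, n = m + 1 := ⟨n - 1, by omega⟩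
    exact Int.le_floor.mpr (by exact_mod_cast (hcqgt m).le)
  have hsnn : (0:ℝ) ≤ s := Real.sqrt_nonneg _
  have hsge1 : (1:ℝ) ≤ s := by
    rw [hs, Real.one_le_sqrt]
    exact_mod_cast by omega
  have ha0 : 1 ≤ a 0 := by
    rw [ha]
    have h1 : ((1:ℤ):ℝ) ≤ cq s 0 := by push_cast; exact hsge1
    exact Int.le_floor.mpr h1
  have ha'1 : ∀ n, 1 ≤ a' n := by
    intro n
    rcases Nat.eq_zero_or_pos n with rfl | hn
    · rw [ha'0]; omega
    · rw [ha' n hn]; exact ha1 n hn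
  -- representation of complete quotients
  have hu1a : u 1 = a 0 := by have := hu 0; rw [ha'0, hv0, hu0] at this; linarith
  have hrep : ∀ n, 1 ≤ n → cq s n = ((u n : ℝ) + s) / (v n) := by
    intro n hn
    induction n with
    | zero => omega
    | succ n ih =>
      have hvm : ((v (n+1) : ℝ)) ≠ 0 := by exact_mod_cast (hvpos (n+1)).ne'
      rcases Nat.eq_zero_or_pos n with rfl | hn1
      · -- base case n = 1
        show (Int.fract (cq s 0)) ⁻¹ = _
        have h0 : cq s 0 = s := rfl
        have hfl : (⌊s⌋ : ℤ) = a 0 := (ha 0).symm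
        rw [← Int.self_sub_floor, h0, hfl, hu1a]
        have hv1 : (v 0) * v 1 = (d:ℤ) - (u 1)^2 := hv 0
        rw [hv0, hu1a, one_mul] at hv1
        have hne : s - (a 0 : ℝ) ≠ 0 := by
          intro hcon
          exact hirr.ne_int (a 0) (by linarith)
        have hv1r : ((v 1 : ℝ)) = (d:ℝ) - (a 0:ℝ)^2 := by exact_mod_cast hv1
        rw [inv_eq_one_div, div_eq_div_iff hne hvm]
        linear_combination hv1r - hss
      · -- inductive case
        have ihh := ih hn1
        show (Int.fract (cq s n)) ⁻¹ = _
        have hfl : (⌊cq s n⌋ : ℤ) = a n := (ha n).symm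
        rw [← Int.self_sub_floor, hfl, ihh]
        have hun : u (n+1) = a n * v n - u n := by rw [hu n, ha' n hn1]
        have hvn : ((v n : ℝ)) ≠ 0 := by exact_mod_cast (hvpos n).ne'
        have hne : s - (u (n+1) : ℝ) ≠ 0 := by
          intro hcon
          exact hirr.ne_int (u (n+1)) (by linarith)
        have hA : ((u n : ℝ) + s) / v n - (a n : ℝ) = (s - (u (n+1):ℝ)) / v n := by
          rw [div_sub' hvn]
          congr 1
          have : ((u (n+1):ℝ)) = (a n : ℝ) * v n - u n := by exact_mod_cast hun
          rw [this]; ring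
        rw [hA, inv_div, div_eq_div_iff hne hvm]
        have hvcast : ((v n:ℝ)) * (v (n+1):ℝ) = (d:ℝ) - ((u (n+1):ℝ))^2 := by
          exact_mod_cast hv n
        linear_combination hvcast - hss
  -- lower bound: u n < s
  have hlow : ∀ n, (u n : ℝ) < s := by
    intro n
    rcases Nat.eq_zero_or_pos n with rfl | hn
    · rw [hu0, ha]
      have : (pq s 0 : ℝ) ≤ s := by
        show ((⌊cq s 0⌋ : ℤ):ℝ) ≤ s
        exact Int.floor_le s
      rcases lt_or_eq_of_le this with h | h
      · exact h
      · exact absurd h.symm (hirr.ne_int _)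
    · obtain ⟨m, rfl⟩ : ∃ m, n = m + 1 := ⟨n - 1, by omega⟩
      have h1 : (u (m+1))^2 < (d:ℤ) := by nlinarith [hv m, hvpos m, hvpos (m+1)]
      have h2 : ((u (m+1):ℝ))^2 < (d:ℝ) := by exact_mod_cast h1
      exact (Real.lt_sqrt (by exact_mod_cast (hupos (m+1)).le)).mpr h2
  have hlowsq : ∀ n, (u n)^2 < (d:ℤ) := by
    intro n
    have := hlow n
    have h2 : ((u n :ℝ))^2 < (d:ℝ) := by nlinarith [hss, (hupos n), (by exact_mod_cast hupos n : (0:ℝ) < (u n:ℝ))]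
    exact_mod_cast h2
  -- upper bound: s < u n + v n
  have hupp : ∀ n, s < (u n : ℝ) + (v n : ℝ) := by
    intro n
    induction n with
    | zero =>
      rw [hu0, hv0, ha]
      push_cast
      have : s < ⌊cq s 0⌋ + 1 := Int.lt_floor_add_one s
      exact_mod_cast this
    | succ n ih =>
      have hkey : v n < 2 * u (n+1) + v (n+1) := by
        rcases le_or_gt (v n) (u (n+1)) with h | h
        · nlinarith [hupos (n+1), hvpos (n+1)]
        · have hle : v n - u (n+1) ≤ u n := by
            have := hu n
            nlinarith [ha'1 n, hvpos n]
          have hsq : (v n - u (n+1))^2 < (d:ℤ) := by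
            have h1 : (v n - u (n+1))^2 ≤ (u n)^2 := by nlinarith [hupos n]
            exact lt_of_le_of_lt h1 (hlowsq n)
          nlinarith [hv n, hvpos n]
      have hd2' : (d:ℤ) < (u (n+1) + v (n+1))^2 := by nlinarith [hv n, hvpos (n+1)]
      have hdr : (d:ℝ) < ((u (n+1):ℝ) + (v (n+1):ℝ))^2 := by exact_mod_cast hd2'
      have hpos : (0:ℝ) < (u (n+1):ℝ) + (v (n+1):ℝ) := by
        exact_mod_cast Int.add_pos (hupos (n+1)) (hvpos (n+1))
      exact (Real.sqrt_lt' hpos).mpr hdr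
  -- generic floor computation
  have hfloor : ∀ (c : ℤ) (m : ℕ), ⌊(c:ℝ) + (s - (u m:ℝ))/(v m:ℝ)⌋ = c := by
    intro c m
    have hvm : (0:ℝ) < (v m:ℝ) := by exact_mod_cast hvpos m
    have h0 : 0 < (s - (u m:ℝ))/(v m:ℝ) := div_pos (by linarith [hlow m]) hvm
    have h1 : (s - (u m:ℝ))/(v m:ℝ) < 1 := (div_lt_one hvm).mpr (by linarith [hupp m])
    rw [Int.floor_intCast_add, Int.floor_eq_zero_iff.mpr ⟨h0.le, h1⟩, add_zero]
  obtain ⟨k, hk⟩ := hdvd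
  have hkpos : 0 < k := by nlinarith [hupos N, hvpos N, hk]
  have haN : a N = 2 * k := by
    have h1 : cq s N = ((u N:ℝ) + s)/(v N:ℝ) := hrep N hN1
    have hvN : ((v N:ℝ)) ≠ 0 := by exact_mod_cast (hvpos N).ne'
    have hkr : ((u N:ℝ)) = (v N:ℝ) * (k:ℝ) := by exact_mod_cast hk
    have h2 : ((u N:ℝ) + s)/(v N:ℝ) = ((2*k : ℤ):ℝ) + (s - (u N:ℝ))/(v N:ℝ) := by
      push_cast
      field_simp
      linear_combination (2:ℝ) * hkr
    rw [ha]
    show ⌊cq s N⌋ = 2 * k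
    rw [h1, h2, hfloor]
  have hsym : ∀ j, j ≤ N - 1 → v (N + j) = v (N - j) ∧ u (N + j + 1) = u (N - j) := by
    intro j
    induction j with
    | zero =>
      intro _
      constructor
      · rfl
      · have h1 := hu N
        rw [ha' N hN1, haN] at h1
        have h2 : u (N + 1) = u N := by rw [h1, hk]; ring
        simpa using h2
    | succ j ih =>
      intro hj
      obtain ⟨ihv, ihu⟩ := ih (by omega)
      have e1 := hv (N + j)
      have e2 := hv (N - j - 1)
      have hidx : N - j - 1 + 1 = N - j := by omega
      rw [hidx] at e2
      rw [ihu, ← e2, ← ihv] at e1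
      have hvv : v (N + j + 1) = v (N - j - 1) := by
        have hne : (v (N + j)) ≠ 0 := (hvpos (N + j)).ne'
        exact mul_left_cancel₀ hne (e1.trans (mul_comm _ _))
      have hm1 : 1 ≤ N - j - 1 := by omega
      have hrepx : cq s (N + j + 1) = ((u (N - j) : ℝ) + s)/((v (N - j - 1):ℝ)) := by
        rw [hrep (N + j + 1) (by omega), ihu, hvv]
      have hukey : u (N - j) = a (N - j - 1) * v (N - j - 1) - u (N - j - 1) := by
        have h3 := hu (N - j - 1)
        rw [hidx] at h3
        rw [h3, ha' _ hm1]
      have haeq : a (N + j + 1) = a (N - j - 1) := by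
        rw [ha]
        show ⌊cq s (N + j + 1)⌋ = a (N - j - 1)
        rw [hrepx]
        have hvm : ((v (N - j - 1):ℝ)) ≠ 0 := by exact_mod_cast (hvpos (N - j - 1)).ne'
        have hc : ((u (N - j):ℝ)) = (a (N - j - 1):ℝ) * (v (N - j - 1):ℝ) - (u (N - j - 1):ℝ) := by
          exact_mod_cast hukey
        have h2 : ((u (N - j):ℝ) + s)/((v (N - j - 1):ℝ))
            = ((a (N - j - 1):ℤ):ℝ) + (s - (u (N - j - 1):ℝ))/((v (N - j - 1):ℝ)) := by
          field_simp
          linear_combination hc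
        rw [h2, hfloor]
      have husucc := hu (N + j + 1)
      rw [ha' _ (by omega), haeq] at husucc
      have i2 : N - (j + 1) = N - j - 1 := by omega
      constructor
      · show v (N + j + 1) = v (N - (j + 1))
        rw [i2]; exact hvv
      · show u (N + j + 1 + 1) = u (N - (j + 1))
        rw [i2, husucc, hvv, ihu, hukey]; ring
  have hsymN := hsym (N - 1) (le_refl _)
  have i3 : N + (N - 1) = 2*N - 1 := by omega
  have i4 : N - (N - 1) = 1 := by omega
  rw [i3, i4] at hsymN
  obtain ⟨hvsym, husym⟩ := hsymN
  have i5 : 2*N - 1 + 1 = 2*N := by omega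
  rw [i5] at husym
  have hv2N : v (2*N) = 1 := by
    have e := hv (2*N - 1)
    rw [i5, hvsym, husym, hu1a] at e
    have e0 := hv 0
    rw [hv0, one_mul, hu1a] at e0
    have h4 : v 1 * v (2*N) = v 1 * 1 := by rw [e, ← e0]; ring
    exact mul_left_cancel₀ (hvpos 1).ne' h4
  have hx2N : cq s (2*N) = ((a 0 : ℤ):ℝ) + s := by
    rw [hrep (2*N) (by omega), husym, hu1a, hv2N]
    norm_num
  have hshift : ∀ n, 1 ≤ n → cq s (n + 2*N) = cq s n := by
    intro n hn
    induction n with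
    | zero => omega
    | succ n ih =>
      rcases Nat.eq_zero_or_pos n with rfl | hn1
      · have i6 : 0 + 1 + 2*N = 2*N + 1 := by omega
        rw [i6]
        show (Int.fract (cq s (2*N)))⁻¹ = (Int.fract (cq s 0))⁻¹
        rw [hx2N]
        congr 1
        exact Int.fract_intCast_add _ _
      · have ihh := ih hn1
        have i7 : n + 1 + 2*N = (n + 2*N) + 1 := by omega
        rw [i7]
        show (Int.fract (cq s (n + 2*N)))⁻¹ = (Int.fract (cq s n))⁻¹
        rw [ihh]
  have hpshift : ∀ n, 1 ≤ n → pq s (n + 2*N) = pq s n := by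
    intro n hn
    show ⌊cq s (n + 2*N)⌋ = ⌊cq s n⌋
    rw [hshift n hn]
  have hTle : T ≤ 2*N := hmin (2*N) (by omega) hpshift
  have hTge : 2*N ≤ T := by
    by_contra hc
    push_neg at hc
    have hP : ∀ n, 1 ≤ n → pq s (n + (2*N - T)) = pq s n := by
      intro n hn
      have h1 := hper (n + (2*N - T)) (by omega)
      have e : n + (2*N - T) + T = n + 2*N := by omega
      rw [e] at h1
      rw [← h1]
      exact hpshift n hn
    have := hmin (2*N - T) (by omega) hP
    omega
  have hTeq : T = 2*N := by omega
  exact ⟨hTeq, hTeq ▸ even_two_mul N⟩
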